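/- If a cubic graph G with m edges has a Petersen-colouring, then scc(G) ≤ (7/5)m. -/

import Mathlib

open scoped Classical

namespace ShortCycleCovers

variable {V : Type*}

/-- A cycle in `G`: a connected 2-regular subgraph. -/
def IsCycleSub {G : SimpleGraph V} (C : G.Subgraph) : Prop :=
  C.Connected ∧ ∀ v ∈ C.verts, (C.neighborSet v).ncard = 2

/-- A cycle cover of `G`: a family of cycles covering every edge at least once. -/
def IsCycleCover (G : SimpleGraph V) (𝒞 : Multiset G.Subgraph) : Prop :=
  (∀ C ∈ 𝒞, IsCycleSub C) ∧ ∀ e ∈ G.edgeSet, ∃ C ∈ 𝒞, e ∈ C.edgeSet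

/-- The length of a family of cycles: the sum of the numbers of edges of its members. -/
noncomputable def coverLength {G : SimpleGraph V} (𝒞 : Multiset G.Subgraph) : ℕ :=
  (𝒞.map fun C => C.edgeSet.ncard).sum

/-- The weight of an edge w.r.t. a family of cycles: the number of members containing it. -/
noncomputable def edgeWeight {G : SimpleGraph V} (𝒞 : Multiset G.Subgraph) (e : Sym2 V) : ℕ :=
  (𝒞.map fun C => if e ∈ C.edgeSet then 1 else 0).sum

/-- A cycle double cover: a family of cycles covering every edge exactly twice. -/
def IsCDC (G : SimpleGraph V) (𝒞 : Multiset G.Subgraph) : Prop :=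
  (∀ C ∈ 𝒞, IsCycleSub C) ∧ ∀ e ∈ G.edgeSet, edgeWeight 𝒞 e = 2

/-- The length of a shortest cycle cover of `G`. -/
noncomputable def scc (G : SimpleGraph V) : ℕ :=
  sInf {L : ℕ | ∃ 𝒞 : Multiset G.Subgraph, IsCycleCover G 𝒞 ∧ coverLength 𝒞 = L}

/-- A cubic graph: every vertex has degree 3. -/
def IsCubic (G : SimpleGraph V) : Prop := ∀ v : V, (G.neighborSet v).ncard = 3

/-- A bridgeless graph: no cut edge. -/
def Bridgeless (G : SimpleGraph V) : Prop := ∀ e ∈ G.edgeSet, ¬ G.IsBridge e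

/-- Vertices of the Petersen graph: 2-element subsets of a 5-element set. -/
abbrev PetersenVert : Type := {s : Finset (Fin 5) // s.card = 2}

/-- The Petersen graph as the Kneser graph on 2-element subsets of a 5-element set,
two subsets adjacent when disjoint. -/
def Petersen : SimpleGraph PetersenVert where
  Adj a b := Disjoint (a : Finset (Fin 5)) (b : Finset (Fin 5))
  symm := ⟨fun a b h => h.symm⟩
  loopless := ⟨fun a h => by
    have h0 : (a : Finset (Fin 5)) = ∅ := disjoint_self.mp h
    have h2 := a.2
    rw [h0] at h2
    simp at h2⟩

/-- A Petersen-colouring of a cubic graph `G`: a map from edges of `G` to edges of the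
Petersen graph such that the three edges at any vertex of `G` are mapped to three
distinct edges sharing a common vertex of the Petersen graph. -/
def IsPetersenColoring (G : SimpleGraph V) (c : Sym2 V → Sym2 PetersenVert) : Prop :=
  (∀ e ∈ G.edgeSet, c e ∈ Petersen.edgeSet) ∧
  ∀ (v : V) (e₁ e₂ e₃ : Sym2 V), e₁ ∈ G.edgeSet → e₂ ∈ G.edgeSet → e₃ ∈ G.edgeSet →
    v ∈ e₁ → v ∈ e₂ → v ∈ e₃ → e₁ ≠ e₂ → e₁ ≠ e₃ → e₂ ≠ e₃ →
    c e₁ ≠ c e₂ ∧ c e₁ ≠ c e₃ ∧ c e₂ ≠ c e₃ ∧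
      ∃ u : PetersenVert, u ∈ c e₁ ∧ u ∈ c e₂ ∧ u ∈ c e₃


section Aux
variable {G : SimpleGraph V}

def ringSub (G : SimpleGraph V) (n : ℕ) [NeZero n] (f : ZMod n → V)
    (hadj : ∀ i, G.Adj (f i) (f (i+1))) : G.Subgraph where
  verts := Set.range f
  Adj a b := ∃ i, (a = f i ∧ b = f (i+1)) ∨ (b = f i ∧ a = f (i+1))
  adj_sub := by
    rintro a b ⟨i, ⟨rfl, rfl⟩ | ⟨rfl, rfl⟩⟩
    · exact hadj i
    · exact (hadj i).symm
  edge_vert := by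
    rintro a b ⟨i, ⟨rfl, rfl⟩ | ⟨rfl, rfl⟩⟩
    · exact ⟨i, rfl⟩
    · exact ⟨i + 1, rfl⟩
  symm := by
    constructor
    rintro a b ⟨i, h | h⟩
    · exact ⟨i, Or.inr h⟩
    · exact ⟨i, Or.inl h⟩

lemma ringSub_adj (G : SimpleGraph V) (n : ℕ) [NeZero n] (f : ZMod n → V) (hadj) (a b : V) :
    (ringSub G n f hadj).Adj a b ↔ ∃ i, (a = f i ∧ b = f (i+1)) ∨ (b = f i ∧ a = f (i+1)) :=
  Iff.rfl

lemma ringSub_isCycle (G : SimpleGraph V) (n : ℕ) [NeZero n] (hn : 3 ≤ n) (f : ZMod n → V)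
    (hadj : ∀ i, G.Adj (f i) (f (i+1))) (hinj : Function.Injective f) :
    IsCycleSub (ringSub G n f hadj) := by
  constructor
  · rw [SimpleGraph.Subgraph.connected_iff]
    refine ⟨⟨?_⟩, ⟨f 0, 0, rfl⟩⟩
    have key : ∀ (k : ℕ) (x : ZMod n), x = (k : ZMod n) →
        (ringSub G n f hadj).coe.Reachable ⟨f 0, 0, rfl⟩ ⟨f x, x, rfl⟩ := by
      intro k
      induction k with
      | zero => intro x hx; rw [Nat.cast_zero] at hx; subst hx; exact SimpleGraph.Reachable.refl _
      | succ k ih =>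
        intro x hx
        refine (ih _ rfl).trans (SimpleGraph.Adj.reachable ?_)
        show (ringSub G n f hadj).Adj _ _
        refine ⟨(k : ZMod n), Or.inl ⟨rfl, ?_⟩⟩
        rw [hx]; push_cast; ring_nf
    rintro ⟨a, i, rfl⟩ ⟨b, j, rfl⟩
    have hi := key i.val i (by rw [ZMod.natCast_val, ZMod.cast_id])
    have hj := key j.val j (by rw [ZMod.natCast_val, ZMod.cast_id])
    exact hi.symm.trans hj
  · rintro v ⟨j, rfl⟩
    have hset : (ringSub G n f hadj).neighborSet (f j) = {f (j+1), f (j-1)} := by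
      ext w
      simp only [SimpleGraph.Subgraph.mem_neighborSet, ringSub_adj, Set.mem_insert_iff,
        Set.mem_singleton_iff]
      constructor
      · rintro ⟨i, ⟨hfi, rfl⟩ | ⟨rfl, hfi⟩⟩
        · rw [hinj hfi]; exact Or.inl rfl
        · exact Or.inr (by rw [hinj hfi, add_sub_cancel_right])
      · rintro (rfl | rfl)
        · exact ⟨j, Or.inl ⟨rfl, rfl⟩⟩
        · exact ⟨j - 1, Or.inr ⟨rfl, by rw [sub_add_cancel]⟩⟩
    rw [hset]
    refine Set.ncard_pair (fun h => ?_)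
    have h2 : (j + 1 : ZMod n) = j - 1 := hinj h
    have h3 : ((2 : ℕ) : ZMod n) = 0 := by push_cast; linear_combination h2
    rw [ZMod.natCast_eq_zero_iff] at h3
    have := Nat.le_of_dvd (by norm_num) h3
    omega


def compSub (H : G.Subgraph) (K : H.coe.ConnectedComponent) : G.Subgraph where
  verts := {v | ∃ h : v ∈ H.verts, H.coe.connectedComponentMk ⟨v, h⟩ = K}
  Adj a b := H.Adj a b ∧ ∃ h : a ∈ H.verts, H.coe.connectedComponentMk ⟨a, h⟩ = K
  adj_sub h := H.adj_sub h.1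
  edge_vert h := h.2
  symm := by
    constructor
    rintro a b ⟨hab, ha, hK⟩
    have hb := H.edge_vert hab.symm
    refine ⟨hab.symm, hb, ?_⟩
    rw [← hK]
    have : H.coe.Adj ⟨b, hb⟩ ⟨a, ha⟩ := hab.symm
    exact SimpleGraph.ConnectedComponent.connectedComponentMk_eq_of_adj this

lemma compSub_ncard (H : G.Subgraph) (K : H.coe.ConnectedComponent)
    (hreg : ∀ v ∈ H.verts, (H.neighborSet v).ncard = 2) (v : V)
    (hv : v ∈ (compSub H K).verts) : ((compSub H K).neighborSet v).ncard = 2 := by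
  obtain ⟨hv', hK⟩ := hv
  have h2 : (compSub H K).neighborSet v = H.neighborSet v := by
    ext w
    simp only [SimpleGraph.Subgraph.mem_neighborSet]
    exact ⟨fun h => h.1, fun h => ⟨h, hv', hK⟩⟩
  rw [h2]; exact hreg v hv'

lemma walk_transfer {H : G.Subgraph} {K : H.coe.ConnectedComponent} {u v : H.verts}
    (p : H.coe.Walk u v) :
    ∀ (hu : (u : V) ∈ (compSub H K).verts) (hv : (v : V) ∈ (compSub H K).verts),
    (compSub H K).coe.Reachable ⟨u, hu⟩ ⟨v, hv⟩ := by
  induction p with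
  | nil => intro hu hv; exact SimpleGraph.Reachable.refl _
  | @cons a b c h p ih =>
    intro hu hv
    have hb : (b : V) ∈ (compSub H K).verts := by
      obtain ⟨ha, hK⟩ := hu
      refine ⟨b.2, ?_⟩
      rw [← hK]
      have : H.coe.Adj ⟨b, b.2⟩ ⟨a, ha⟩ := SimpleGraph.Subgraph.Adj.symm h
      exact SimpleGraph.ConnectedComponent.connectedComponentMk_eq_of_adj this
    have hadj : (compSub H K).coe.Adj ⟨(a : V), hu⟩ ⟨(b : V), hb⟩ := by
      refine ⟨h, hu⟩
    exact (hadj.reachable).trans (ih hb hv)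

lemma compSub_connected (H : G.Subgraph) (K : H.coe.ConnectedComponent) :
    (compSub H K).Connected := by
  obtain ⟨⟨v0, h0⟩, hK0⟩ := K.exists_rep
  rw [SimpleGraph.Subgraph.connected_iff]
  refine ⟨⟨?_⟩, ⟨v0, h0, hK0⟩⟩
  rintro ⟨a, ha, hKa⟩ ⟨b, hb, hKb⟩
  have hr : H.coe.Reachable ⟨a, ha⟩ ⟨b, hb⟩ :=
    (SimpleGraph.ConnectedComponent.eq).mp (hKa.trans hKb.symm)
  obtain ⟨p⟩ := hr
  exact walk_transfer p ⟨ha, hKa⟩ ⟨hb, hKb⟩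

lemma sum_ite_unique {α : Type*} [Fintype α] (p : α → Prop) (h : ∃! a, p a) :
    (∑ a : α, if p a then 1 else 0) = 1 := by
  obtain ⟨a, ha, hu⟩ := h
  rw [Finset.sum_eq_single a]
  · simp [ha]
  · intro b _ hb
    simp only [ite_eq_right_iff]
    intro hpb; exact absurd (hu b hpb) hb
  · simp

lemma decomp [Fintype V] (H : G.Subgraph)
    (hreg : ∀ v ∈ H.verts, (H.neighborSet v).ncard = 2) :
    ∃ 𝒞 : Multiset G.Subgraph, (∀ C ∈ 𝒞, IsCycleSub C) ∧
      (∀ e ∈ H.edgeSet, ∃ C ∈ 𝒞, e ∈ C.edgeSet) ∧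
      (𝒞.map fun C => C.edgeSet.ncard).sum = H.edgeSet.ncard := by
  haveI : Fintype H.coe.ConnectedComponent := Fintype.ofFinite _
  refine ⟨(Finset.univ : Finset H.coe.ConnectedComponent).val.map (compSub H), ?_, ?_, ?_⟩
  · intro C hC
    obtain ⟨K, _, rfl⟩ := Multiset.mem_map.mp hC
    exact ⟨compSub_connected H K, compSub_ncard H K hreg⟩
  · intro e he
    induction e with
    | _ a b =>
      have hab : H.Adj a b := he
      have ha := H.edge_vert hab
      refine ⟨compSub H (H.coe.connectedComponentMk ⟨a, ha⟩), ?_, ?_⟩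
      · exact Multiset.mem_map.mpr ⟨_, Finset.mem_univ _, rfl⟩
      · exact ⟨hab, ha, rfl⟩
  · -- sum of component edge counts
    have hsub : ∀ K, (compSub H K).edgeSet ⊆ H.edgeSet := by
      intro K e
      induction e with
      | _ a b =>
        intro h
        exact SimpleGraph.Subgraph.mem_edgeSet.mpr (SimpleGraph.Subgraph.mem_edgeSet.mp h).1
    set F : Finset (Sym2 V) := H.edgeSet.toFinset with hF
    have hcard : ∀ K, (compSub H K).edgeSet.ncard
        = ∑ e ∈ F, if e ∈ (compSub H K).edgeSet then 1 else 0 := by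
      intro K
      have heq : (compSub H K).edgeSet = ↑(F.filter (· ∈ (compSub H K).edgeSet)) := by
        ext e
        simp only [Finset.coe_filter, Set.mem_setOf_eq, Finset.mem_coe, Finset.mem_filter,
          hF, Set.mem_toFinset]
        exact ⟨fun h => ⟨hsub K h, h⟩, fun h => h.2⟩
      have h2 : (compSub H K).edgeSet.ncard
          = (F.filter (· ∈ (compSub H K).edgeSet)).card := by
        conv_lhs => rw [heq]
        rw [Set.ncard_coe_finset]
      rw [h2, Finset.card_filter]
    rw [Multiset.map_map]
    have : ((Finset.univ : Finset H.coe.ConnectedComponent).val.map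
        fun K => (compSub H K).edgeSet.ncard).sum
        = ∑ K : H.coe.ConnectedComponent, (compSub H K).edgeSet.ncard := rfl
    rw [Function.comp_def]
    rw [show ((Finset.univ : Finset H.coe.ConnectedComponent).val.map
        fun K => (compSub H K).edgeSet.ncard).sum
        = ∑ K : H.coe.ConnectedComponent, (compSub H K).edgeSet.ncard from rfl]
    rw [Finset.sum_congr rfl (fun K _ => hcard K), Finset.sum_comm]
    have hone : ∀ e ∈ F, (∑ K : H.coe.ConnectedComponent,
        if e ∈ (compSub H K).edgeSet then 1 else 0) = 1 := by
      intro e he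
      rw [hF, Set.mem_toFinset] at he
      refine sum_ite_unique _ ?_
      induction e with
      | _ a b =>
        have hab : H.Adj a b := he
        have ha := H.edge_vert hab
        refine ⟨H.coe.connectedComponentMk ⟨a, ha⟩, ⟨hab, ha, rfl⟩, ?_⟩
        rintro K ⟨_, ha', hK⟩
        rw [← hK]
    rw [Finset.sum_congr rfl hone, Finset.sum_const, smul_eq_mul, mul_one,
      Set.ncard_eq_toFinset_card']


lemma exists_other {P' : SimpleGraph W} {f : Sym2 W} {u : W}
    (hf : f ∈ P'.edgeSet) (hu : u ∈ f) : ∃ m, P'.Adj u m ∧ f = s(u, m) := by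
  induction f with
  | _ a b =>
    rcases Sym2.mem_iff.mp hu with rfl | rfl
    · exact ⟨b, hf, rfl⟩
    · exact ⟨a, ((SimpleGraph.mem_edgeSet P').mp hf).symm, Sym2.eq_swap⟩

/-- the edges of a 2-regular subgraph at a vertex of it -/
lemma two_incident {P' : SimpleGraph W} (C : P'.Subgraph)
    (hC2 : ∀ v ∈ C.verts, (C.neighborSet v).ncard = 2) {u : W} (hu : u ∈ C.verts) :
    ∃ x y, x ≠ y ∧ C.Adj u x ∧ C.Adj u y ∧
      ∀ f, (f ∈ C.edgeSet ∧ u ∈ f) ↔ (f = s(u, x) ∨ f = s(u, y)) := by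
  obtain ⟨x, y, hxy, hset⟩ := Set.ncard_eq_two.mp (hC2 u hu)
  have hx : C.Adj u x := by rw [← SimpleGraph.Subgraph.mem_neighborSet, hset]; exact Or.inl rfl
  have hy : C.Adj u y := by rw [← SimpleGraph.Subgraph.mem_neighborSet, hset]; exact Or.inr rfl
  refine ⟨x, y, hxy, hx, hy, fun f => ⟨?_, ?_⟩⟩
  · rintro ⟨hf, huf⟩
    induction f with
    | _ a b =>
      rcases Sym2.mem_iff.mp huf with rfl | rfl
      · have hb : b ∈ C.neighborSet u := SimpleGraph.Subgraph.mem_edgeSet.mp hf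
        rw [hset] at hb
        rcases hb with rfl | rfl
        · exact Or.inl rfl
        · exact Or.inr rfl
      · have ha : a ∈ C.neighborSet u := (SimpleGraph.Subgraph.mem_edgeSet.mp hf).symm
        rw [hset] at ha
        rcases ha with rfl | rfl
        · exact Or.inl Sym2.eq_swap
        · exact Or.inr Sym2.eq_swap
  · rintro (rfl | rfl)
    · exact ⟨SimpleGraph.Subgraph.mem_edgeSet.mpr hx, Sym2.mem_mk_left _ _⟩
    · exact ⟨SimpleGraph.Subgraph.mem_edgeSet.mpr hy, Sym2.mem_mk_left _ _⟩

instance : DecidableEq PetersenVert := fun _ _ => Subtype.instDecidableEq _ _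

instance : DecidableRel Petersen.Adj := fun a b =>
  inferInstanceAs (Decidable (Disjoint (a : Finset (Fin 5)) (b : Finset (Fin 5))))

lemma petersen_cubic : IsCubic Petersen := by
  have key : ∀ u : PetersenVert,
      (Finset.univ.filter fun b => Petersen.Adj u b).card = 3 := by decide
  intro u
  have h : Petersen.neighborSet u = ↑(Finset.univ.filter fun b => Petersen.Adj u b) := by
    ext b; simp [SimpleGraph.neighborSet]
  rw [h, Set.ncard_coe_finset]
  exact key u

/-- pullback of a subgraph of Petersen along a colouring -/
def pullSub (G : SimpleGraph V) (c : Sym2 V → Sym2 PetersenVert)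
    (C : Petersen.Subgraph) : G.Subgraph where
  verts := {v | ∃ w, G.Adj v w ∧ c s(v, w) ∈ C.edgeSet}
  Adj a b := G.Adj a b ∧ c s(a, b) ∈ C.edgeSet
  adj_sub h := h.1
  edge_vert h := ⟨_, h⟩
  symm := by
    constructor
    rintro a b ⟨hab, hc⟩
    exact ⟨hab.symm, by rwa [Sym2.eq_swap]⟩

lemma pullSub_edgeSet (G : SimpleGraph V) (c : Sym2 V → Sym2 PetersenVert)
    (C : Petersen.Subgraph) (e : Sym2 V) :
    e ∈ (pullSub G c C).edgeSet ↔ e ∈ G.edgeSet ∧ c e ∈ C.edgeSet := by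
  induction e with
  | _ a b => exact Iff.rfl

lemma pull_degree {G : SimpleGraph V} {c : Sym2 V → Sym2 PetersenVert}
    (hcubic : IsCubic G) (hcol : IsPetersenColoring G c) (C : Petersen.Subgraph)
    (hC2 : ∀ v ∈ C.verts, (C.neighborSet v).ncard = 2) :
    ∀ v ∈ (pullSub G c C).verts, (((pullSub G c C)).neighborSet v).ncard = 2 := by
  rintro v ⟨w0, hw0, hcw0⟩
  obtain ⟨w1, w2, w3, h12, h13, h23, hN⟩ := Set.ncard_eq_three.mp (hcubic v)
  have hGw : ∀ w, G.Adj v w ↔ w = w1 ∨ w = w2 ∨ w = w3 := by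
    intro w
    rw [← SimpleGraph.mem_neighborSet, hN]
    simp [Set.mem_insert_iff]
  have hadj : ∀ k ∈ ({w1, w2, w3} : Set V), G.Adj v k := by
    intro k hk; rw [hGw]; simpa using hk
  have ha1 : G.Adj v w1 := hadj w1 (by simp)
  have ha2 : G.Adj v w2 := hadj w2 (by simp)
  have ha3 : G.Adj v w3 := hadj w3 (by simp)
  have he1 : s(v, w1) ∈ G.edgeSet := ha1
  have he2 : s(v, w2) ∈ G.edgeSet := ha2
  have he3 : s(v, w3) ∈ G.edgeSet := ha3
  have hne : ∀ {a b : V}, a ≠ b → s(v, a) ≠ s(v, b) := by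
    intro a b hab h
    exact hab (Sym2.congr_right.mp h)
  obtain ⟨hc12, hc13, hc23, u, hu1, hu2, hu3⟩ :=
    hcol.2 v s(v, w1) s(v, w2) s(v, w3) he1 he2 he3
      (Sym2.mem_mk_left _ _) (Sym2.mem_mk_left _ _) (Sym2.mem_mk_left _ _)
      (hne h12) (hne h13) (hne h23)
  obtain ⟨m1, hm1, hf1⟩ := exists_other (hcol.1 _ he1) hu1
  obtain ⟨m2, hm2, hf2⟩ := exists_other (hcol.1 _ he2) hu2
  obtain ⟨m3, hm3, hf3⟩ := exists_other (hcol.1 _ he3) hu3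
  have hmne12 : m1 ≠ m2 := fun h => hc12 (by rw [hf1, hf2, h])
  have hmne13 : m1 ≠ m3 := fun h => hc13 (by rw [hf1, hf3, h])
  have hmne23 : m2 ≠ m3 := fun h => hc23 (by rw [hf2, hf3, h])
  -- {m1,m2,m3} = Petersen.neighborSet u
  have hmsub : ({m1, m2, m3} : Set PetersenVert) ⊆ Petersen.neighborSet u := by
    rintro m (rfl | rfl | rfl)
    · exact hm1
    · exact hm2
    · exact hm3
  have hmeq : ({m1, m2, m3} : Set PetersenVert) = Petersen.neighborSet u := by
    refine Set.eq_of_subset_of_ncard_le hmsub ?_ (Set.toFinite _)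
    rw [petersen_cubic u, Set.ncard_eq_three.mpr ⟨m1, m2, m3, hmne12, hmne13, hmne23, rfl⟩]
  -- u ∈ C.verts
  have hw0mem : w0 = w1 ∨ w0 = w2 ∨ w0 = w3 := (hGw w0).mp hw0
  have huC : u ∈ C.verts := by
    rcases hw0mem with rfl | rfl | rfl
    · rw [hf1] at hcw0; exact C.edge_vert (SimpleGraph.Subgraph.mem_edgeSet.mp hcw0)
    · rw [hf2] at hcw0; exact C.edge_vert (SimpleGraph.Subgraph.mem_edgeSet.mp hcw0)
    · rw [hf3] at hcw0; exact C.edge_vert (SimpleGraph.Subgraph.mem_edgeSet.mp hcw0)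
  obtain ⟨x, y, hxy, hCx, hCy, hinc⟩ := two_incident C hC2 huC
  -- x and y are among m1 m2 m3
  have hxm : x ∈ ({m1, m2, m3} : Set PetersenVert) := by
    rw [hmeq]; exact C.adj_sub hCx
  have hym : y ∈ ({m1, m2, m3} : Set PetersenVert) := by
    rw [hmeq]; exact C.adj_sub hCy
  -- the colour of the k-th edge is in C iff m_k ∈ {x, y}
  have hkey : ∀ (wk : V) (mk : PetersenVert), c s(v, wk) = s(u, mk) →
      (c s(v, wk) ∈ C.edgeSet ↔ (mk = x ∨ mk = y)) := by
    intro wk mk hf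
    constructor
    · intro hmem
      have := (hinc (c s(v, wk))).mp ⟨hmem, by rw [hf]; exact Sym2.mem_mk_left _ _⟩
      rcases this with h | h
      · exact Or.inl (Sym2.congr_right.mp (hf ▸ h))
      · exact Or.inr (Sym2.congr_right.mp (hf ▸ h))
    · rintro (rfl | rfl)
      · rw [hf]; exact SimpleGraph.Subgraph.mem_edgeSet.mpr hCx
      · rw [hf]; exact SimpleGraph.Subgraph.mem_edgeSet.mpr hCy
  -- conclude: neighbor set of v in the pullback
  classical
  have hfinal : (pullSub G c C).neighborSet v
      = {w | (w = w1 ∧ (m1 = x ∨ m1 = y)) ∨ (w = w2 ∧ (m2 = x ∨ m2 = y))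
          ∨ (w = w3 ∧ (m3 = x ∨ m3 = y))} := by
    ext w
    simp only [SimpleGraph.Subgraph.mem_neighborSet, Set.mem_setOf_eq]
    constructor
    · rintro ⟨hadjw, hcc⟩
      rcases (hGw w).mp hadjw with rfl | rfl | rfl
      · exact Or.inl ⟨rfl, (hkey _ _ hf1).mp hcc⟩
      · exact Or.inr (Or.inl ⟨rfl, (hkey _ _ hf2).mp hcc⟩)
      · exact Or.inr (Or.inr ⟨rfl, (hkey _ _ hf3).mp hcc⟩)
    · rintro (⟨rfl, hm⟩ | ⟨rfl, hm⟩ | ⟨rfl, hm⟩)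
      · exact ⟨ha1, (hkey _ _ hf1).mpr hm⟩
      · exact ⟨ha2, (hkey _ _ hf2).mpr hm⟩
      · exact ⟨ha3, (hkey _ _ hf3).mpr hm⟩
  -- exactly two of the three conditions hold
  rw [hfinal]
  -- helper cases
  have case12 : ∀ (P1 P2 P3 : Prop), P1 → P2 → ¬P3 →
      ({w | (w = w1 ∧ P1) ∨ (w = w2 ∧ P2) ∨ (w = w3 ∧ P3)} : Set V).ncard = 2 := by
    intro P1 P2 P3 p1 p2 p3
    have hs : {w | (w = w1 ∧ P1) ∨ (w = w2 ∧ P2) ∨ (w = w3 ∧ P3)} = ({w1, w2} : Set V) := by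
      ext w; simp [p1, p2, p3]
    rw [hs]; exact Set.ncard_pair h12
  have case13 : ∀ (P1 P2 P3 : Prop), P1 → ¬P2 → P3 →
      ({w | (w = w1 ∧ P1) ∨ (w = w2 ∧ P2) ∨ (w = w3 ∧ P3)} : Set V).ncard = 2 := by
    intro P1 P2 P3 p1 p2 p3
    have hs : {w | (w = w1 ∧ P1) ∨ (w = w2 ∧ P2) ∨ (w = w3 ∧ P3)} = ({w1, w3} : Set V) := by
      ext w; simp [p1, p2, p3]
    rw [hs]; exact Set.ncard_pair h13
  have case23 : ∀ (P1 P2 P3 : Prop), ¬P1 → P2 → P3 →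
      ({w | (w = w1 ∧ P1) ∨ (w = w2 ∧ P2) ∨ (w = w3 ∧ P3)} : Set V).ncard = 2 := by
    intro P1 P2 P3 p1 p2 p3
    have hs : {w | (w = w1 ∧ P1) ∨ (w = w2 ∧ P2) ∨ (w = w3 ∧ P3)} = ({w2, w3} : Set V) := by
      ext w; simp [p1, p2, p3]
    rw [hs]; exact Set.ncard_pair h23
  have hxm' : x = m1 ∨ x = m2 ∨ x = m3 := by simpa using hxm
  have hym' : y = m1 ∨ y = m2 ∨ y = m3 := by simpa using hym
  rcases hxm' with hx | hx | hx <;> rcases hym' with hy | hy | hy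
  · exact absurd (hx.trans hy.symm) hxy
  · exact case12 _ _ _ (Or.inl hx.symm) (Or.inr hy.symm)
      (by rintro (h | h); exacts [hmne13 (h.trans hx).symm, hmne23 (h.trans hy).symm])
  · exact case13 _ _ _ (Or.inl hx.symm)
      (by rintro (h | h); exacts [hmne12 (h.trans hx).symm, hmne23 (h.trans hy)]) (Or.inr hy.symm)
  · exact case12 _ _ _ (Or.inr hy.symm) (Or.inl hx.symm)
      (by rintro (h | h); exacts [hmne23 (h.trans hx).symm, hmne13 (h.trans hy).symm])
  · exact absurd (hx.trans hy.symm) hxy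
  · exact case23 _ _ _
      (by rintro (h | h); exacts [hmne12 (h.trans hx), hmne13 (h.trans hy)])
      (Or.inl hx.symm) (Or.inr hy.symm)
  · exact case13 _ _ _ (Or.inr hy.symm)
      (by rintro (h | h); exacts [hmne23 (h.trans hx), hmne12 (h.trans hy).symm]) (Or.inl hx.symm)
  · exact case23 _ _ _
      (by rintro (h | h); exacts [hmne13 (h.trans hx), hmne12 (h.trans hy)])
      (Or.inr hy.symm) (Or.inl hx.symm)
  · exact absurd (hx.trans hy.symm) hxy


abbrev rAdj (n : ℕ) [NeZero n] (f : ZMod n → PetersenVert) (a b : PetersenVert) : Prop :=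
  ∃ i : ZMod n, (a = f i ∧ b = f (i+1)) ∨ (b = f i ∧ a = f (i+1))

def V01 : PetersenVert := ⟨{0, 1}, by decide⟩
def V02 : PetersenVert := ⟨{0, 2}, by decide⟩
def V03 : PetersenVert := ⟨{0, 3}, by decide⟩
def V04 : PetersenVert := ⟨{0, 4}, by decide⟩
def V12 : PetersenVert := ⟨{1, 2}, by decide⟩
def V13 : PetersenVert := ⟨{1, 3}, by decide⟩
def V14 : PetersenVert := ⟨{1, 4}, by decide⟩
def V23 : PetersenVert := ⟨{2, 3}, by decide⟩
def V24 : PetersenVert := ⟨{2, 4}, by decide⟩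
def V34 : PetersenVert := ⟨{3, 4}, by decide⟩

def f0_0 : ZMod 5 → PetersenVert := ![V01, V23, V04, V12, V34]
def C0_0 : Petersen.Subgraph := ringSub Petersen 5 f0_0 (by decide)
instance : DecidableRel (C0_0).Adj := fun a b => inferInstanceAs (Decidable (rAdj 5 f0_0 a b))
instance : DecidablePred (· ∈ (C0_0).edgeSet) := fun e => Sym2.fromRel.decidablePred _ e
lemma cyc0_0 : IsCycleSub C0_0 := ringSub_isCycle Petersen 5 (by norm_num) f0_0 (by decide) (by decide)

def f0_1 : ZMod 5 → PetersenVert := ![V01, V23, V14, V03, V24]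
def C0_1 : Petersen.Subgraph := ringSub Petersen 5 f0_1 (by decide)
instance : DecidableRel (C0_1).Adj := fun a b => inferInstanceAs (Decidable (rAdj 5 f0_1 a b))
instance : DecidablePred (· ∈ (C0_1).edgeSet) := fun e => Sym2.fromRel.decidablePred _ e
lemma cyc0_1 : IsCycleSub C0_1 := ringSub_isCycle Petersen 5 (by norm_num) f0_1 (by decide) (by decide)

def f0_2 : ZMod 5 → PetersenVert := ![V01, V24, V13, V02, V34]
def C0_2 : Petersen.Subgraph := ringSub Petersen 5 f0_2 (by decide)
instance : DecidableRel (C0_2).Adj := fun a b => inferInstanceAs (Decidable (rAdj 5 f0_2 a b))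
instance : DecidablePred (· ∈ (C0_2).edgeSet) := fun e => Sym2.fromRel.decidablePred _ e
lemma cyc0_2 : IsCycleSub C0_2 := ringSub_isCycle Petersen 5 (by norm_num) f0_2 (by decide) (by decide)

def f0_3 : ZMod 6 → PetersenVert := ![V02, V13, V04, V12, V03, V14]
def C0_3 : Petersen.Subgraph := ringSub Petersen 6 f0_3 (by decide)
instance : DecidableRel (C0_3).Adj := fun a b => inferInstanceAs (Decidable (rAdj 6 f0_3 a b))
instance : DecidablePred (· ∈ (C0_3).edgeSet) := fun e => Sym2.fromRel.decidablePred _ e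
lemma cyc0_3 : IsCycleSub C0_3 := ringSub_isCycle Petersen 6 (by norm_num) f0_3 (by decide) (by decide)

def f1_0 : ZMod 5 → PetersenVert := ![V01, V23, V14, V02, V34]
def C1_0 : Petersen.Subgraph := ringSub Petersen 5 f1_0 (by decide)
instance : DecidableRel (C1_0).Adj := fun a b => inferInstanceAs (Decidable (rAdj 5 f1_0 a b))
instance : DecidablePred (· ∈ (C1_0).edgeSet) := fun e => Sym2.fromRel.decidablePred _ e
lemma cyc1_0 : IsCycleSub C1_0 := ringSub_isCycle Petersen 5 (by norm_num) f1_0 (by decide) (by decide)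

def f1_1 : ZMod 5 → PetersenVert := ![V02, V13, V04, V12, V34]
def C1_1 : Petersen.Subgraph := ringSub Petersen 5 f1_1 (by decide)
instance : DecidableRel (C1_1).Adj := fun a b => inferInstanceAs (Decidable (rAdj 5 f1_1 a b))
instance : DecidablePred (· ∈ (C1_1).edgeSet) := fun e => Sym2.fromRel.decidablePred _ e
lemma cyc1_1 : IsCycleSub C1_1 := ringSub_isCycle Petersen 5 (by norm_num) f1_1 (by decide) (by decide)

def f1_2 : ZMod 5 → PetersenVert := ![V02, V13, V24, V03, V14]
def C1_2 : Petersen.Subgraph := ringSub Petersen 5 f1_2 (by decide)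
instance : DecidableRel (C1_2).Adj := fun a b => inferInstanceAs (Decidable (rAdj 5 f1_2 a b))
instance : DecidablePred (· ∈ (C1_2).edgeSet) := fun e => Sym2.fromRel.decidablePred _ e
lemma cyc1_2 : IsCycleSub C1_2 := ringSub_isCycle Petersen 5 (by norm_num) f1_2 (by decide) (by decide)

def f1_3 : ZMod 6 → PetersenVert := ![V01, V23, V04, V12, V03, V24]
def C1_3 : Petersen.Subgraph := ringSub Petersen 6 f1_3 (by decide)
instance : DecidableRel (C1_3).Adj := fun a b => inferInstanceAs (Decidable (rAdj 6 f1_3 a b))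
instance : DecidablePred (· ∈ (C1_3).edgeSet) := fun e => Sym2.fromRel.decidablePred _ e
lemma cyc1_3 : IsCycleSub C1_3 := ringSub_isCycle Petersen 6 (by norm_num) f1_3 (by decide) (by decide)

def f2_0 : ZMod 5 → PetersenVert := ![V01, V23, V04, V12, V34]
def C2_0 : Petersen.Subgraph := ringSub Petersen 5 f2_0 (by decide)
instance : DecidableRel (C2_0).Adj := fun a b => inferInstanceAs (Decidable (rAdj 5 f2_0 a b))
instance : DecidablePred (· ∈ (C2_0).edgeSet) := fun e => Sym2.fromRel.decidablePred _ e
lemma cyc2_0 : IsCycleSub C2_0 := ringSub_isCycle Petersen 5 (by norm_num) f2_0 (by decide) (by decide)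

def f2_1 : ZMod 5 → PetersenVert := ![V02, V14, V03, V12, V34]
def C2_1 : Petersen.Subgraph := ringSub Petersen 5 f2_1 (by decide)
instance : DecidableRel (C2_1).Adj := fun a b => inferInstanceAs (Decidable (rAdj 5 f2_1 a b))
instance : DecidablePred (· ∈ (C2_1).edgeSet) := fun e => Sym2.fromRel.decidablePred _ e
lemma cyc2_1 : IsCycleSub C2_1 := ringSub_isCycle Petersen 5 (by norm_num) f2_1 (by decide) (by decide)

def f2_2 : ZMod 5 → PetersenVert := ![V03, V12, V04, V13, V24]
def C2_2 : Petersen.Subgraph := ringSub Petersen 5 f2_2 (by decide)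
instance : DecidableRel (C2_2).Adj := fun a b => inferInstanceAs (Decidable (rAdj 5 f2_2 a b))
instance : DecidablePred (· ∈ (C2_2).edgeSet) := fun e => Sym2.fromRel.decidablePred _ e
lemma cyc2_2 : IsCycleSub C2_2 := ringSub_isCycle Petersen 5 (by norm_num) f2_2 (by decide) (by decide)

def f2_3 : ZMod 6 → PetersenVert := ![V01, V23, V14, V02, V13, V24]
def C2_3 : Petersen.Subgraph := ringSub Petersen 6 f2_3 (by decide)
instance : DecidableRel (C2_3).Adj := fun a b => inferInstanceAs (Decidable (rAdj 6 f2_3 a b))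
instance : DecidablePred (· ∈ (C2_3).edgeSet) := fun e => Sym2.fromRel.decidablePred _ e
lemma cyc2_3 : IsCycleSub C2_3 := ringSub_isCycle Petersen 6 (by norm_num) f2_3 (by decide) (by decide)

def f3_0 : ZMod 5 → PetersenVert := ![V01, V23, V04, V13, V24]
def C3_0 : Petersen.Subgraph := ringSub Petersen 5 f3_0 (by decide)
instance : DecidableRel (C3_0).Adj := fun a b => inferInstanceAs (Decidable (rAdj 5 f3_0 a b))
instance : DecidablePred (· ∈ (C3_0).edgeSet) := fun e => Sym2.fromRel.decidablePred _ e
lemma cyc3_0 : IsCycleSub C3_0 := ringSub_isCycle Petersen 5 (by norm_num) f3_0 (by decide) (by decide)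

def f3_1 : ZMod 5 → PetersenVert := ![V01, V23, V14, V02, V34]
def C3_1 : Petersen.Subgraph := ringSub Petersen 5 f3_1 (by decide)
instance : DecidableRel (C3_1).Adj := fun a b => inferInstanceAs (Decidable (rAdj 5 f3_1 a b))
instance : DecidablePred (· ∈ (C3_1).edgeSet) := fun e => Sym2.fromRel.decidablePred _ e
lemma cyc3_1 : IsCycleSub C3_1 := ringSub_isCycle Petersen 5 (by norm_num) f3_1 (by decide) (by decide)

def f3_2 : ZMod 5 → PetersenVert := ![V03, V12, V04, V23, V14]
def C3_2 : Petersen.Subgraph := ringSub Petersen 5 f3_2 (by decide)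
instance : DecidableRel (C3_2).Adj := fun a b => inferInstanceAs (Decidable (rAdj 5 f3_2 a b))
instance : DecidablePred (· ∈ (C3_2).edgeSet) := fun e => Sym2.fromRel.decidablePred _ e
lemma cyc3_2 : IsCycleSub C3_2 := ringSub_isCycle Petersen 5 (by norm_num) f3_2 (by decide) (by decide)

def f3_3 : ZMod 6 → PetersenVert := ![V02, V13, V24, V03, V12, V34]
def C3_3 : Petersen.Subgraph := ringSub Petersen 6 f3_3 (by decide)
instance : DecidableRel (C3_3).Adj := fun a b => inferInstanceAs (Decidable (rAdj 6 f3_3 a b))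
instance : DecidablePred (· ∈ (C3_3).edgeSet) := fun e => Sym2.fromRel.decidablePred _ e
lemma cyc3_3 : IsCycleSub C3_3 := ringSub_isCycle Petersen 6 (by norm_num) f3_3 (by decide) (by decide)

def f4_0 : ZMod 5 → PetersenVert := ![V01, V23, V14, V03, V24]
def C4_0 : Petersen.Subgraph := ringSub Petersen 5 f4_0 (by decide)
instance : DecidableRel (C4_0).Adj := fun a b => inferInstanceAs (Decidable (rAdj 5 f4_0 a b))
instance : DecidablePred (· ∈ (C4_0).edgeSet) := fun e => Sym2.fromRel.decidablePred _ e
lemma cyc4_0 : IsCycleSub C4_0 := ringSub_isCycle Petersen 5 (by norm_num) f4_0 (by decide) (by decide)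

def f4_1 : ZMod 5 → PetersenVert := ![V02, V13, V04, V23, V14]
def C4_1 : Petersen.Subgraph := ringSub Petersen 5 f4_1 (by decide)
instance : DecidableRel (C4_1).Adj := fun a b => inferInstanceAs (Decidable (rAdj 5 f4_1 a b))
instance : DecidablePred (· ∈ (C4_1).edgeSet) := fun e => Sym2.fromRel.decidablePred _ e
lemma cyc4_1 : IsCycleSub C4_1 := ringSub_isCycle Petersen 5 (by norm_num) f4_1 (by decide) (by decide)

def f4_2 : ZMod 5 → PetersenVert := ![V02, V14, V03, V12, V34]
def C4_2 : Petersen.Subgraph := ringSub Petersen 5 f4_2 (by decide)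
instance : DecidableRel (C4_2).Adj := fun a b => inferInstanceAs (Decidable (rAdj 5 f4_2 a b))
instance : DecidablePred (· ∈ (C4_2).edgeSet) := fun e => Sym2.fromRel.decidablePred _ e
lemma cyc4_2 : IsCycleSub C4_2 := ringSub_isCycle Petersen 5 (by norm_num) f4_2 (by decide) (by decide)

def f4_3 : ZMod 6 → PetersenVert := ![V01, V24, V13, V04, V12, V34]
def C4_3 : Petersen.Subgraph := ringSub Petersen 6 f4_3 (by decide)
instance : DecidableRel (C4_3).Adj := fun a b => inferInstanceAs (Decidable (rAdj 6 f4_3 a b))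
instance : DecidablePred (· ∈ (C4_3).edgeSet) := fun e => Sym2.fromRel.decidablePred _ e
lemma cyc4_3 : IsCycleSub C4_3 := ringSub_isCycle Petersen 6 (by norm_num) f4_3 (by decide) (by decide)

def f5_0 : ZMod 5 → PetersenVert := ![V01, V23, V04, V13, V24]
def C5_0 : Petersen.Subgraph := ringSub Petersen 5 f5_0 (by decide)
instance : DecidableRel (C5_0).Adj := fun a b => inferInstanceAs (Decidable (rAdj 5 f5_0 a b))
instance : DecidablePred (· ∈ (C5_0).edgeSet) := fun e => Sym2.fromRel.decidablePred _ e
lemma cyc5_0 : IsCycleSub C5_0 := ringSub_isCycle Petersen 5 (by norm_num) f5_0 (by decide) (by decide)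

def f5_1 : ZMod 5 → PetersenVert := ![V01, V24, V03, V12, V34]
def C5_1 : Petersen.Subgraph := ringSub Petersen 5 f5_1 (by decide)
instance : DecidableRel (C5_1).Adj := fun a b => inferInstanceAs (Decidable (rAdj 5 f5_1 a b))
instance : DecidablePred (· ∈ (C5_1).edgeSet) := fun e => Sym2.fromRel.decidablePred _ e
lemma cyc5_1 : IsCycleSub C5_1 := ringSub_isCycle Petersen 5 (by norm_num) f5_1 (by decide) (by decide)

def f5_2 : ZMod 5 → PetersenVert := ![V02, V13, V24, V03, V14]
def C5_2 : Petersen.Subgraph := ringSub Petersen 5 f5_2 (by decide)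
instance : DecidableRel (C5_2).Adj := fun a b => inferInstanceAs (Decidable (rAdj 5 f5_2 a b))
instance : DecidablePred (· ∈ (C5_2).edgeSet) := fun e => Sym2.fromRel.decidablePred _ e
lemma cyc5_2 : IsCycleSub C5_2 := ringSub_isCycle Petersen 5 (by norm_num) f5_2 (by decide) (by decide)

def f5_3 : ZMod 6 → PetersenVert := ![V02, V14, V23, V04, V12, V34]
def C5_3 : Petersen.Subgraph := ringSub Petersen 6 f5_3 (by decide)
instance : DecidableRel (C5_3).Adj := fun a b => inferInstanceAs (Decidable (rAdj 6 f5_3 a b))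
instance : DecidablePred (· ∈ (C5_3).edgeSet) := fun e => Sym2.fromRel.decidablePred _ e
lemma cyc5_3 : IsCycleSub C5_3 := ringSub_isCycle Petersen 6 (by norm_num) f5_3 (by decide) (by decide)

def f6_0 : ZMod 5 → PetersenVert := ![V01, V23, V04, V13, V24]
def C6_0 : Petersen.Subgraph := ringSub Petersen 5 f6_0 (by decide)
instance : DecidableRel (C6_0).Adj := fun a b => inferInstanceAs (Decidable (rAdj 5 f6_0 a b))
instance : DecidablePred (· ∈ (C6_0).edgeSet) := fun e => Sym2.fromRel.decidablePred _ e
lemma cyc6_0 : IsCycleSub C6_0 := ringSub_isCycle Petersen 5 (by norm_num) f6_0 (by decide) (by decide)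

def f6_1 : ZMod 5 → PetersenVert := ![V02, V13, V04, V12, V34]
def C6_1 : Petersen.Subgraph := ringSub Petersen 5 f6_1 (by decide)
instance : DecidableRel (C6_1).Adj := fun a b => inferInstanceAs (Decidable (rAdj 5 f6_1 a b))
instance : DecidablePred (· ∈ (C6_1).edgeSet) := fun e => Sym2.fromRel.decidablePred _ e
lemma cyc6_1 : IsCycleSub C6_1 := ringSub_isCycle Petersen 5 (by norm_num) f6_1 (by decide) (by decide)

def f6_2 : ZMod 5 → PetersenVert := ![V03, V12, V04, V23, V14]
def C6_2 : Petersen.Subgraph := ringSub Petersen 5 f6_2 (by decide)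
instance : DecidableRel (C6_2).Adj := fun a b => inferInstanceAs (Decidable (rAdj 5 f6_2 a b))
instance : DecidablePred (· ∈ (C6_2).edgeSet) := fun e => Sym2.fromRel.decidablePred _ e
lemma cyc6_2 : IsCycleSub C6_2 := ringSub_isCycle Petersen 5 (by norm_num) f6_2 (by decide) (by decide)

def f6_3 : ZMod 6 → PetersenVert := ![V01, V24, V03, V14, V02, V34]
def C6_3 : Petersen.Subgraph := ringSub Petersen 6 f6_3 (by decide)
instance : DecidableRel (C6_3).Adj := fun a b => inferInstanceAs (Decidable (rAdj 6 f6_3 a b))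
instance : DecidablePred (· ∈ (C6_3).edgeSet) := fun e => Sym2.fromRel.decidablePred _ e
lemma cyc6_3 : IsCycleSub C6_3 := ringSub_isCycle Petersen 6 (by norm_num) f6_3 (by decide) (by decide)

def f7_0 : ZMod 5 → PetersenVert := ![V01, V24, V03, V12, V34]
def C7_0 : Petersen.Subgraph := ringSub Petersen 5 f7_0 (by decide)
instance : DecidableRel (C7_0).Adj := fun a b => inferInstanceAs (Decidable (rAdj 5 f7_0 a b))
instance : DecidablePred (· ∈ (C7_0).edgeSet) := fun e => Sym2.fromRel.decidablePred _ e
lemma cyc7_0 : IsCycleSub C7_0 := ringSub_isCycle Petersen 5 (by norm_num) f7_0 (by decide) (by decide)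

def f7_1 : ZMod 5 → PetersenVert := ![V02, V13, V24, V03, V14]
def C7_1 : Petersen.Subgraph := ringSub Petersen 5 f7_1 (by decide)
instance : DecidableRel (C7_1).Adj := fun a b => inferInstanceAs (Decidable (rAdj 5 f7_1 a b))
instance : DecidablePred (· ∈ (C7_1).edgeSet) := fun e => Sym2.fromRel.decidablePred _ e
lemma cyc7_1 : IsCycleSub C7_1 := ringSub_isCycle Petersen 5 (by norm_num) f7_1 (by decide) (by decide)

def f7_2 : ZMod 5 → PetersenVert := ![V03, V12, V04, V23, V14]
def C7_2 : Petersen.Subgraph := ringSub Petersen 5 f7_2 (by decide)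
instance : DecidableRel (C7_2).Adj := fun a b => inferInstanceAs (Decidable (rAdj 5 f7_2 a b))
instance : DecidablePred (· ∈ (C7_2).edgeSet) := fun e => Sym2.fromRel.decidablePred _ e
lemma cyc7_2 : IsCycleSub C7_2 := ringSub_isCycle Petersen 5 (by norm_num) f7_2 (by decide) (by decide)

def f7_3 : ZMod 6 → PetersenVert := ![V01, V23, V04, V13, V02, V34]
def C7_3 : Petersen.Subgraph := ringSub Petersen 6 f7_3 (by decide)
instance : DecidableRel (C7_3).Adj := fun a b => inferInstanceAs (Decidable (rAdj 6 f7_3 a b))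
instance : DecidablePred (· ∈ (C7_3).edgeSet) := fun e => Sym2.fromRel.decidablePred _ e
lemma cyc7_3 : IsCycleSub C7_3 := ringSub_isCycle Petersen 6 (by norm_num) f7_3 (by decide) (by decide)

def f8_0 : ZMod 5 → PetersenVert := ![V01, V24, V13, V02, V34]
def C8_0 : Petersen.Subgraph := ringSub Petersen 5 f8_0 (by decide)
instance : DecidableRel (C8_0).Adj := fun a b => inferInstanceAs (Decidable (rAdj 5 f8_0 a b))
instance : DecidablePred (· ∈ (C8_0).edgeSet) := fun e => Sym2.fromRel.decidablePred _ e
lemma cyc8_0 : IsCycleSub C8_0 := ringSub_isCycle Petersen 5 (by norm_num) f8_0 (by decide) (by decide)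

def f8_1 : ZMod 5 → PetersenVert := ![V02, V13, V04, V23, V14]
def C8_1 : Petersen.Subgraph := ringSub Petersen 5 f8_1 (by decide)
instance : DecidableRel (C8_1).Adj := fun a b => inferInstanceAs (Decidable (rAdj 5 f8_1 a b))
instance : DecidablePred (· ∈ (C8_1).edgeSet) := fun e => Sym2.fromRel.decidablePred _ e
lemma cyc8_1 : IsCycleSub C8_1 := ringSub_isCycle Petersen 5 (by norm_num) f8_1 (by decide) (by decide)

def f8_2 : ZMod 5 → PetersenVert := ![V03, V12, V04, V13, V24]
def C8_2 : Petersen.Subgraph := ringSub Petersen 5 f8_2 (by decide)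
instance : DecidableRel (C8_2).Adj := fun a b => inferInstanceAs (Decidable (rAdj 5 f8_2 a b))
instance : DecidablePred (· ∈ (C8_2).edgeSet) := fun e => Sym2.fromRel.decidablePred _ e
lemma cyc8_2 : IsCycleSub C8_2 := ringSub_isCycle Petersen 5 (by norm_num) f8_2 (by decide) (by decide)

def f8_3 : ZMod 6 → PetersenVert := ![V01, V23, V14, V03, V12, V34]
def C8_3 : Petersen.Subgraph := ringSub Petersen 6 f8_3 (by decide)
instance : DecidableRel (C8_3).Adj := fun a b => inferInstanceAs (Decidable (rAdj 6 f8_3 a b))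
instance : DecidablePred (· ∈ (C8_3).edgeSet) := fun e => Sym2.fromRel.decidablePred _ e
lemma cyc8_3 : IsCycleSub C8_3 := ringSub_isCycle Petersen 6 (by norm_num) f8_3 (by decide) (by decide)

def f9_0 : ZMod 5 → PetersenVert := ![V01, V23, V14, V02, V34]
def C9_0 : Petersen.Subgraph := ringSub Petersen 5 f9_0 (by decide)
instance : DecidableRel (C9_0).Adj := fun a b => inferInstanceAs (Decidable (rAdj 5 f9_0 a b))
instance : DecidablePred (· ∈ (C9_0).edgeSet) := fun e => Sym2.fromRel.decidablePred _ e
lemma cyc9_0 : IsCycleSub C9_0 := ringSub_isCycle Petersen 5 (by norm_num) f9_0 (by decide) (by decide)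

def f9_1 : ZMod 5 → PetersenVert := ![V01, V24, V03, V12, V34]
def C9_1 : Petersen.Subgraph := ringSub Petersen 5 f9_1 (by decide)
instance : DecidableRel (C9_1).Adj := fun a b => inferInstanceAs (Decidable (rAdj 5 f9_1 a b))
instance : DecidablePred (· ∈ (C9_1).edgeSet) := fun e => Sym2.fromRel.decidablePred _ e
lemma cyc9_1 : IsCycleSub C9_1 := ringSub_isCycle Petersen 5 (by norm_num) f9_1 (by decide) (by decide)

def f9_2 : ZMod 5 → PetersenVert := ![V02, V13, V04, V12, V34]
def C9_2 : Petersen.Subgraph := ringSub Petersen 5 f9_2 (by decide)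
instance : DecidableRel (C9_2).Adj := fun a b => inferInstanceAs (Decidable (rAdj 5 f9_2 a b))
instance : DecidablePred (· ∈ (C9_2).edgeSet) := fun e => Sym2.fromRel.decidablePred _ e
lemma cyc9_2 : IsCycleSub C9_2 := ringSub_isCycle Petersen 5 (by norm_num) f9_2 (by decide) (by decide)

def f9_3 : ZMod 6 → PetersenVert := ![V03, V14, V23, V04, V13, V24]
def C9_3 : Petersen.Subgraph := ringSub Petersen 6 f9_3 (by decide)
instance : DecidableRel (C9_3).Adj := fun a b => inferInstanceAs (Decidable (rAdj 6 f9_3 a b))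
instance : DecidablePred (· ∈ (C9_3).edgeSet) := fun e => Sym2.fromRel.decidablePred _ e
lemma cyc9_3 : IsCycleSub C9_3 := ringSub_isCycle Petersen 6 (by norm_num) f9_3 (by decide) (by decide)

lemma covfact0 : ∀ a b : PetersenVert, Petersen.Adj a b → (C0_0).Adj a b ∨ (C0_1).Adj a b ∨ (C0_2).Adj a b ∨ (C0_3).Adj a b := by decide
lemma covfact1 : ∀ a b : PetersenVert, Petersen.Adj a b → (C1_0).Adj a b ∨ (C1_1).Adj a b ∨ (C1_2).Adj a b ∨ (C1_3).Adj a b := by decide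
lemma covfact2 : ∀ a b : PetersenVert, Petersen.Adj a b → (C2_0).Adj a b ∨ (C2_1).Adj a b ∨ (C2_2).Adj a b ∨ (C2_3).Adj a b := by decide
lemma covfact3 : ∀ a b : PetersenVert, Petersen.Adj a b → (C3_0).Adj a b ∨ (C3_1).Adj a b ∨ (C3_2).Adj a b ∨ (C3_3).Adj a b := by decide
lemma covfact4 : ∀ a b : PetersenVert, Petersen.Adj a b → (C4_0).Adj a b ∨ (C4_1).Adj a b ∨ (C4_2).Adj a b ∨ (C4_3).Adj a b := by decide
lemma covfact5 : ∀ a b : PetersenVert, Petersen.Adj a b → (C5_0).Adj a b ∨ (C5_1).Adj a b ∨ (C5_2).Adj a b ∨ (C5_3).Adj a b := by decide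
lemma covfact6 : ∀ a b : PetersenVert, Petersen.Adj a b → (C6_0).Adj a b ∨ (C6_1).Adj a b ∨ (C6_2).Adj a b ∨ (C6_3).Adj a b := by decide
lemma covfact7 : ∀ a b : PetersenVert, Petersen.Adj a b → (C7_0).Adj a b ∨ (C7_1).Adj a b ∨ (C7_2).Adj a b ∨ (C7_3).Adj a b := by decide
lemma covfact8 : ∀ a b : PetersenVert, Petersen.Adj a b → (C8_0).Adj a b ∨ (C8_1).Adj a b ∨ (C8_2).Adj a b ∨ (C8_3).Adj a b := by decide
lemma covfact9 : ∀ a b : PetersenVert, Petersen.Adj a b → (C9_0).Adj a b ∨ (C9_1).Adj a b ∨ (C9_2).Adj a b ∨ (C9_3).Adj a b := by decide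

lemma fact14 : ∀ a b : PetersenVert, Petersen.Adj a b →
    (if s(a, b) ∈ (C0_0).edgeSet then 1 else 0) + (if s(a, b) ∈ (C0_1).edgeSet then 1 else 0) + (if s(a, b) ∈ (C0_2).edgeSet then 1 else 0) + (if s(a, b) ∈ (C0_3).edgeSet then 1 else 0) + (if s(a, b) ∈ (C1_0).edgeSet then 1 else 0) + (if s(a, b) ∈ (C1_1).edgeSet then 1 else 0) + (if s(a, b) ∈ (C1_2).edgeSet then 1 else 0) + (if s(a, b) ∈ (C1_3).edgeSet then 1 else 0) + (if s(a, b) ∈ (C2_0).edgeSet then 1 else 0) + (if s(a, b) ∈ (C2_1).edgeSet then 1 else 0) + (if s(a, b) ∈ (C2_2).edgeSet then 1 else 0) + (if s(a, b) ∈ (C2_3).edgeSet then 1 else 0) + (if s(a, b) ∈ (C3_0).edgeSet then 1 else 0) + (if s(a, b) ∈ (C3_1).edgeSet then 1 else 0) + (if s(a, b) ∈ (C3_2).edgeSet then 1 else 0) + (if s(a, b) ∈ (C3_3).edgeSet then 1 else 0) + (if s(a, b) ∈ (C4_0).edgeSet then 1 else 0) + (if s(a, b) ∈ (C4_1).edgeSet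 then 1 else 0) + (if s(a, b) ∈ (C4_2).edgeSet then 1 else 0) + (if s(a, b) ∈ (C4_3).edgeSet then 1 else 0) + (if s(a, b) ∈ (C5_0).edgeSet then 1 else 0) + (if s(a, b) ∈ (C5_1).edgeSet then 1 else 0) + (if s(a, b) ∈ (C5_2).edgeSet then 1 else 0) + (if s(a, b) ∈ (C5_3).edgeSet then 1 else 0) + (if s(a, b) ∈ (C6_0).edgeSet then 1 else 0) + (if s(a, b) ∈ (C6_1).edgeSet then 1 else 0) + (if s(a, b) ∈ (C6_2).edgeSet then 1 else 0) + (if s(a, b) ∈ (C6_3).edgeSet then 1 else 0) + (if s(a, b) ∈ (C7_0).edgeSet then 1 else 0) + (if s(a, b) ∈ (C7_1).edgeSet then 1 else 0) + (if s(a, b) ∈ (C7_2).edgeSet then 1 else 0) + (if s(a, b) ∈ (C7_3).edgeSet then 1 else 0) + (if s(a, b) ∈ (C8_0).edgeSet then 1 else 0) + (if s(a, b) ∈ (C8_1).edgeSet then 1 else 0) + (if s(a, b) ∈ (C8_2).edgeSet then 1 else 0) + (if s(a, b) ∈ (C8_3).edgeSet then 1 else 0) + (if s(a, b) ∈ (C9_0).edgeSet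 then 1 else 0) + (if s(a, b) ∈ (C9_1).edgeSet then 1 else 0) + (if s(a, b) ∈ (C9_2).edgeSet then 1 else 0) + (if s(a, b) ∈ (C9_3).edgeSet then 1 else 0) = 14 := by decide


lemma pull_ncard [Fintype V] (G : SimpleGraph V) (c : Sym2 V → Sym2 PetersenVert)
    (C : Petersen.Subgraph) [DecidablePred (· ∈ C.edgeSet)] :
    (pullSub G c C).edgeSet.ncard
      = ∑ e ∈ G.edgeSet.toFinset, if c e ∈ C.edgeSet then 1 else 0 := by
  classical
  have heq : (pullSub G c C).edgeSet
      = ↑(G.edgeSet.toFinset.filter (fun e => c e ∈ C.edgeSet)) := by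
    ext e
    simp only [Finset.coe_filter, Set.mem_setOf_eq, Set.mem_toFinset, pullSub_edgeSet]
  have h2 : (pullSub G c C).edgeSet.ncard
      = (G.edgeSet.toFinset.filter (fun e => c e ∈ C.edgeSet)).card := by
    conv_lhs => rw [heq]
    rw [Set.ncard_coe_finset]
  rw [h2, Finset.card_filter]

lemma pull_cover [Fintype V] {c : Sym2 V → Sym2 PetersenVert}
    (hcubic : IsCubic G) (hcol : IsPetersenColoring G c) :
    ∀ (L : List Petersen.Subgraph),
    (∀ C ∈ L, ∀ v ∈ C.verts, (C.neighborSet v).ncard = 2) →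
    ∃ 𝒞 : Multiset G.Subgraph, (∀ D ∈ 𝒞, IsCycleSub D) ∧
      (∀ e ∈ G.edgeSet, (∃ C ∈ L, c e ∈ C.edgeSet) → ∃ D ∈ 𝒞, e ∈ D.edgeSet) ∧
      coverLength 𝒞 = (L.map fun C => (pullSub G c C).edgeSet.ncard).sum := by
  intro L
  induction L with
  | nil =>
    intro _
    refine ⟨0, by simp, ?_, by simp [coverLength]⟩
    rintro e he ⟨C, hC, -⟩
    exact absurd hC List.not_mem_nil
  | cons C L ih =>
    intro h2
    obtain ⟨𝒞L, hL1, hL2, hL3⟩ := ih (fun C' hC' => h2 C' (List.mem_cons_of_mem _ hC'))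
    obtain ⟨𝒞C, hC1, hC2, hC3⟩ :=
      decomp (pullSub G c C) (pull_degree hcubic hcol C (h2 C List.mem_cons_self))
    refine ⟨𝒞C + 𝒞L, ?_, ?_, ?_⟩
    · intro D hD
      rcases Multiset.mem_add.mp hD with h | h
      · exact hC1 D h
      · exact hL1 D h
    · rintro e he ⟨C', hC', hme⟩
      rcases List.mem_cons.mp hC' with rfl | h
      · obtain ⟨D, hD, hDe⟩ := hC2 e ((pullSub_edgeSet G c C' e).mpr ⟨he, hme⟩)
        exact ⟨D, Multiset.mem_add.mpr (Or.inl hD), hDe⟩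
      · obtain ⟨D, hD, hDe⟩ := hL2 e he ⟨C', h, hme⟩
        exact ⟨D, Multiset.mem_add.mpr (Or.inr hD), hDe⟩
    · simp only [coverLength, Multiset.map_add, Multiset.sum_add, List.map_cons, List.sum_cons]
      simp only [coverLength] at hL3
      rw [hC3, hL3]

end Aux


/-- A cubic graph with a Petersen-colouring has `scc G ≤ (7/5)m`. -/
theorem statement16 [Fintype V] (G : SimpleGraph V) (hcubic : IsCubic G)
    (hcol : ∃ c : Sym2 V → Sym2 PetersenVert, IsPetersenColoring G c) :
    5 * scc G ≤ 7 * G.edgeSet.ncard := by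
  classical
  obtain ⟨c, hcol⟩ := hcol
  have hm : G.edgeSet.ncard = G.edgeSet.toFinset.card := Set.ncard_eq_toFinset_card' _
  have hrep : ∀ e ∈ G.edgeSet, ∃ a b : PetersenVert, c e = s(a, b) ∧ Petersen.Adj a b := by
    intro e he
    obtain ⟨⟨a, b⟩, he'⟩ := Quot.exists_rep (c e)
    have h1 := hcol.1 e he
    rw [← he'] at h1
    exact ⟨a, b, he'.symm, (Petersen.mem_edgeSet).mp h1⟩
  obtain ⟨A0, hA0cyc, hA0cov, hA0len⟩ := pull_cover hcubic hcol [C0_0, C0_1, C0_2, C0_3] (by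
    intro C hC
    simp only [List.mem_cons, List.not_mem_nil, or_false] at hC
    rcases hC with rfl | rfl | rfl | rfl
    exacts [cyc0_0.2, cyc0_1.2, cyc0_2.2, cyc0_3.2])
  have hscc0 : scc G ≤ coverLength A0 := by
    refine Nat.sInf_le ⟨A0, ⟨hA0cyc, ?_⟩, rfl⟩
    intro e he
    refine hA0cov e he ?_
    obtain ⟨a, b, he', hab⟩ := hrep e he
    rcases covfact0 a b hab with h | h | h | h
    · exact ⟨C0_0, by simp, by rw [he']; exact SimpleGraph.Subgraph.mem_edgeSet.mpr h⟩
    · exact ⟨C0_1, by simp, by rw [he']; exact SimpleGraph.Subgraph.mem_edgeSet.mpr h⟩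
    · exact ⟨C0_2, by simp, by rw [he']; exact SimpleGraph.Subgraph.mem_edgeSet.mpr h⟩
    · exact ⟨C0_3, by simp, by rw [he']; exact SimpleGraph.Subgraph.mem_edgeSet.mpr h⟩
  have hlen0 : coverLength A0 = ∑ e ∈ G.edgeSet.toFinset, ((if c e ∈ (C0_0).edgeSet then 1 else 0) + ((if c e ∈ (C0_1).edgeSet then 1 else 0) + ((if c e ∈ (C0_2).edgeSet then 1 else 0) + ((if c e ∈ (C0_3).edgeSet then 1 else 0))))) := by
    rw [hA0len]
    simp only [List.map_cons, List.sum_cons, List.map_nil, List.sum_nil, add_zero]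
    rw [pull_ncard G c C0_0, pull_ncard G c C0_1, pull_ncard G c C0_2, pull_ncard G c C0_3]
    rw [← Finset.sum_add_distrib, ← Finset.sum_add_distrib, ← Finset.sum_add_distrib]
  obtain ⟨A1, hA1cyc, hA1cov, hA1len⟩ := pull_cover hcubic hcol [C1_0, C1_1, C1_2, C1_3] (by
    intro C hC
    simp only [List.mem_cons, List.not_mem_nil, or_false] at hC
    rcases hC with rfl | rfl | rfl | rfl
    exacts [cyc1_0.2, cyc1_1.2, cyc1_2.2, cyc1_3.2])
  have hscc1 : scc G ≤ coverLength A1 := by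
    refine Nat.sInf_le ⟨A1, ⟨hA1cyc, ?_⟩, rfl⟩
    intro e he
    refine hA1cov e he ?_
    obtain ⟨a, b, he', hab⟩ := hrep e he
    rcases covfact1 a b hab with h | h | h | h
    · exact ⟨C1_0, by simp, by rw [he']; exact SimpleGraph.Subgraph.mem_edgeSet.mpr h⟩
    · exact ⟨C1_1, by simp, by rw [he']; exact SimpleGraph.Subgraph.mem_edgeSet.mpr h⟩
    · exact ⟨C1_2, by simp, by rw [he']; exact SimpleGraph.Subgraph.mem_edgeSet.mpr h⟩
    · exact ⟨C1_3, by simp, by rw [he']; exact SimpleGraph.Subgraph.mem_edgeSet.mpr h⟩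
  have hlen1 : coverLength A1 = ∑ e ∈ G.edgeSet.toFinset, ((if c e ∈ (C1_0).edgeSet then 1 else 0) + ((if c e ∈ (C1_1).edgeSet then 1 else 0) + ((if c e ∈ (C1_2).edgeSet then 1 else 0) + ((if c e ∈ (C1_3).edgeSet then 1 else 0))))) := by
    rw [hA1len]
    simp only [List.map_cons, List.sum_cons, List.map_nil, List.sum_nil, add_zero]
    rw [pull_ncard G c C1_0, pull_ncard G c C1_1, pull_ncard G c C1_2, pull_ncard G c C1_3]
    rw [← Finset.sum_add_distrib, ← Finset.sum_add_distrib, ← Finset.sum_add_distrib]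
  obtain ⟨A2, hA2cyc, hA2cov, hA2len⟩ := pull_cover hcubic hcol [C2_0, C2_1, C2_2, C2_3] (by
    intro C hC
    simp only [List.mem_cons, List.not_mem_nil, or_false] at hC
    rcases hC with rfl | rfl | rfl | rfl
    exacts [cyc2_0.2, cyc2_1.2, cyc2_2.2, cyc2_3.2])
  have hscc2 : scc G ≤ coverLength A2 := by
    refine Nat.sInf_le ⟨A2, ⟨hA2cyc, ?_⟩, rfl⟩
    intro e he
    refine hA2cov e he ?_
    obtain ⟨a, b, he', hab⟩ := hrep e he
    rcases covfact2 a b hab with h | h | h | h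
    · exact ⟨C2_0, by simp, by rw [he']; exact SimpleGraph.Subgraph.mem_edgeSet.mpr h⟩
    · exact ⟨C2_1, by simp, by rw [he']; exact SimpleGraph.Subgraph.mem_edgeSet.mpr h⟩
    · exact ⟨C2_2, by simp, by rw [he']; exact SimpleGraph.Subgraph.mem_edgeSet.mpr h⟩
    · exact ⟨C2_3, by simp, by rw [he']; exact SimpleGraph.Subgraph.mem_edgeSet.mpr h⟩
  have hlen2 : coverLength A2 = ∑ e ∈ G.edgeSet.toFinset, ((if c e ∈ (C2_0).edgeSet then 1 else 0) + ((if c e ∈ (C2_1).edgeSet then 1 else 0) + ((if c e ∈ (C2_2).edgeSet then 1 else 0) + ((if c e ∈ (C2_3).edgeSet then 1 else 0))))) := by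
    rw [hA2len]
    simp only [List.map_cons, List.sum_cons, List.map_nil, List.sum_nil, add_zero]
    rw [pull_ncard G c C2_0, pull_ncard G c C2_1, pull_ncard G c C2_2, pull_ncard G c C2_3]
    rw [← Finset.sum_add_distrib, ← Finset.sum_add_distrib, ← Finset.sum_add_distrib]
  obtain ⟨A3, hA3cyc, hA3cov, hA3len⟩ := pull_cover hcubic hcol [C3_0, C3_1, C3_2, C3_3] (by
    intro C hC
    simp only [List.mem_cons, List.not_mem_nil, or_false] at hC
    rcases hC with rfl | rfl | rfl | rfl
    exacts [cyc3_0.2, cyc3_1.2, cyc3_2.2, cyc3_3.2])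
  have hscc3 : scc G ≤ coverLength A3 := by
    refine Nat.sInf_le ⟨A3, ⟨hA3cyc, ?_⟩, rfl⟩
    intro e he
    refine hA3cov e he ?_
    obtain ⟨a, b, he', hab⟩ := hrep e he
    rcases covfact3 a b hab with h | h | h | h
    · exact ⟨C3_0, by simp, by rw [he']; exact SimpleGraph.Subgraph.mem_edgeSet.mpr h⟩
    · exact ⟨C3_1, by simp, by rw [he']; exact SimpleGraph.Subgraph.mem_edgeSet.mpr h⟩
    · exact ⟨C3_2, by simp, by rw [he']; exact SimpleGraph.Subgraph.mem_edgeSet.mpr h⟩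
    · exact ⟨C3_3, by simp, by rw [he']; exact SimpleGraph.Subgraph.mem_edgeSet.mpr h⟩
  have hlen3 : coverLength A3 = ∑ e ∈ G.edgeSet.toFinset, ((if c e ∈ (C3_0).edgeSet then 1 else 0) + ((if c e ∈ (C3_1).edgeSet then 1 else 0) + ((if c e ∈ (C3_2).edgeSet then 1 else 0) + ((if c e ∈ (C3_3).edgeSet then 1 else 0))))) := by
    rw [hA3len]
    simp only [List.map_cons, List.sum_cons, List.map_nil, List.sum_nil, add_zero]
    rw [pull_ncard G c C3_0, pull_ncard G c C3_1, pull_ncard G c C3_2, pull_ncard G c C3_3]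
    rw [← Finset.sum_add_distrib, ← Finset.sum_add_distrib, ← Finset.sum_add_distrib]
  obtain ⟨A4, hA4cyc, hA4cov, hA4len⟩ := pull_cover hcubic hcol [C4_0, C4_1, C4_2, C4_3] (by
    intro C hC
    simp only [List.mem_cons, List.not_mem_nil, or_false] at hC
    rcases hC with rfl | rfl | rfl | rfl
    exacts [cyc4_0.2, cyc4_1.2, cyc4_2.2, cyc4_3.2])
  have hscc4 : scc G ≤ coverLength A4 := by
    refine Nat.sInf_le ⟨A4, ⟨hA4cyc, ?_⟩, rfl⟩
    intro e he
    refine hA4cov e he ?_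
    obtain ⟨a, b, he', hab⟩ := hrep e he
    rcases covfact4 a b hab with h | h | h | h
    · exact ⟨C4_0, by simp, by rw [he']; exact SimpleGraph.Subgraph.mem_edgeSet.mpr h⟩
    · exact ⟨C4_1, by simp, by rw [he']; exact SimpleGraph.Subgraph.mem_edgeSet.mpr h⟩
    · exact ⟨C4_2, by simp, by rw [he']; exact SimpleGraph.Subgraph.mem_edgeSet.mpr h⟩
    · exact ⟨C4_3, by simp, by rw [he']; exact SimpleGraph.Subgraph.mem_edgeSet.mpr h⟩
  have hlen4 : coverLength A4 = ∑ e ∈ G.edgeSet.toFinset, ((if c e ∈ (C4_0).edgeSet then 1 else 0) + ((if c e ∈ (C4_1).edgeSet then 1 else 0) + ((if c e ∈ (C4_2).edgeSet then 1 else 0) + ((if c e ∈ (C4_3).edgeSet then 1 else 0))))) := by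
    rw [hA4len]
    simp only [List.map_cons, List.sum_cons, List.map_nil, List.sum_nil, add_zero]
    rw [pull_ncard G c C4_0, pull_ncard G c C4_1, pull_ncard G c C4_2, pull_ncard G c C4_3]
    rw [← Finset.sum_add_distrib, ← Finset.sum_add_distrib, ← Finset.sum_add_distrib]
  obtain ⟨A5, hA5cyc, hA5cov, hA5len⟩ := pull_cover hcubic hcol [C5_0, C5_1, C5_2, C5_3] (by
    intro C hC
    simp only [List.mem_cons, List.not_mem_nil, or_false] at hC
    rcases hC with rfl | rfl | rfl | rfl
    exacts [cyc5_0.2, cyc5_1.2, cyc5_2.2, cyc5_3.2])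
  have hscc5 : scc G ≤ coverLength A5 := by
    refine Nat.sInf_le ⟨A5, ⟨hA5cyc, ?_⟩, rfl⟩
    intro e he
    refine hA5cov e he ?_
    obtain ⟨a, b, he', hab⟩ := hrep e he
    rcases covfact5 a b hab with h | h | h | h
    · exact ⟨C5_0, by simp, by rw [he']; exact SimpleGraph.Subgraph.mem_edgeSet.mpr h⟩
    · exact ⟨C5_1, by simp, by rw [he']; exact SimpleGraph.Subgraph.mem_edgeSet.mpr h⟩
    · exact ⟨C5_2, by simp, by rw [he']; exact SimpleGraph.Subgraph.mem_edgeSet.mpr h⟩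
    · exact ⟨C5_3, by simp, by rw [he']; exact SimpleGraph.Subgraph.mem_edgeSet.mpr h⟩
  have hlen5 : coverLength A5 = ∑ e ∈ G.edgeSet.toFinset, ((if c e ∈ (C5_0).edgeSet then 1 else 0) + ((if c e ∈ (C5_1).edgeSet then 1 else 0) + ((if c e ∈ (C5_2).edgeSet then 1 else 0) + ((if c e ∈ (C5_3).edgeSet then 1 else 0))))) := by
    rw [hA5len]
    simp only [List.map_cons, List.sum_cons, List.map_nil, List.sum_nil, add_zero]
    rw [pull_ncard G c C5_0, pull_ncard G c C5_1, pull_ncard G c C5_2, pull_ncard G c C5_3]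
    rw [← Finset.sum_add_distrib, ← Finset.sum_add_distrib, ← Finset.sum_add_distrib]
  obtain ⟨A6, hA6cyc, hA6cov, hA6len⟩ := pull_cover hcubic hcol [C6_0, C6_1, C6_2, C6_3] (by
    intro C hC
    simp only [List.mem_cons, List.not_mem_nil, or_false] at hC
    rcases hC with rfl | rfl | rfl | rfl
    exacts [cyc6_0.2, cyc6_1.2, cyc6_2.2, cyc6_3.2])
  have hscc6 : scc G ≤ coverLength A6 := by
    refine Nat.sInf_le ⟨A6, ⟨hA6cyc, ?_⟩, rfl⟩
    intro e he
    refine hA6cov e he ?_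
    obtain ⟨a, b, he', hab⟩ := hrep e he
    rcases covfact6 a b hab with h | h | h | h
    · exact ⟨C6_0, by simp, by rw [he']; exact SimpleGraph.Subgraph.mem_edgeSet.mpr h⟩
    · exact ⟨C6_1, by simp, by rw [he']; exact SimpleGraph.Subgraph.mem_edgeSet.mpr h⟩
    · exact ⟨C6_2, by simp, by rw [he']; exact SimpleGraph.Subgraph.mem_edgeSet.mpr h⟩
    · exact ⟨C6_3, by simp, by rw [he']; exact SimpleGraph.Subgraph.mem_edgeSet.mpr h⟩
  have hlen6 : coverLength A6 = ∑ e ∈ G.edgeSet.toFinset, ((if c e ∈ (C6_0).edgeSet then 1 else 0) + ((if c e ∈ (C6_1).edgeSet then 1 else 0) + ((if c e ∈ (C6_2).edgeSet then 1 else 0) + ((if c e ∈ (C6_3).edgeSet then 1 else 0))))) := by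
    rw [hA6len]
    simp only [List.map_cons, List.sum_cons, List.map_nil, List.sum_nil, add_zero]
    rw [pull_ncard G c C6_0, pull_ncard G c C6_1, pull_ncard G c C6_2, pull_ncard G c C6_3]
    rw [← Finset.sum_add_distrib, ← Finset.sum_add_distrib, ← Finset.sum_add_distrib]
  obtain ⟨A7, hA7cyc, hA7cov, hA7len⟩ := pull_cover hcubic hcol [C7_0, C7_1, C7_2, C7_3] (by
    intro C hC
    simp only [List.mem_cons, List.not_mem_nil, or_false] at hC
    rcases hC with rfl | rfl | rfl | rfl
    exacts [cyc7_0.2, cyc7_1.2, cyc7_2.2, cyc7_3.2])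
  have hscc7 : scc G ≤ coverLength A7 := by
    refine Nat.sInf_le ⟨A7, ⟨hA7cyc, ?_⟩, rfl⟩
    intro e he
    refine hA7cov e he ?_
    obtain ⟨a, b, he', hab⟩ := hrep e he
    rcases covfact7 a b hab with h | h | h | h
    · exact ⟨C7_0, by simp, by rw [he']; exact SimpleGraph.Subgraph.mem_edgeSet.mpr h⟩
    · exact ⟨C7_1, by simp, by rw [he']; exact SimpleGraph.Subgraph.mem_edgeSet.mpr h⟩
    · exact ⟨C7_2, by simp, by rw [he']; exact SimpleGraph.Subgraph.mem_edgeSet.mpr h⟩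
    · exact ⟨C7_3, by simp, by rw [he']; exact SimpleGraph.Subgraph.mem_edgeSet.mpr h⟩
  have hlen7 : coverLength A7 = ∑ e ∈ G.edgeSet.toFinset, ((if c e ∈ (C7_0).edgeSet then 1 else 0) + ((if c e ∈ (C7_1).edgeSet then 1 else 0) + ((if c e ∈ (C7_2).edgeSet then 1 else 0) + ((if c e ∈ (C7_3).edgeSet then 1 else 0))))) := by
    rw [hA7len]
    simp only [List.map_cons, List.sum_cons, List.map_nil, List.sum_nil, add_zero]
    rw [pull_ncard G c C7_0, pull_ncard G c C7_1, pull_ncard G c C7_2, pull_ncard G c C7_3]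
    rw [← Finset.sum_add_distrib, ← Finset.sum_add_distrib, ← Finset.sum_add_distrib]
  obtain ⟨A8, hA8cyc, hA8cov, hA8len⟩ := pull_cover hcubic hcol [C8_0, C8_1, C8_2, C8_3] (by
    intro C hC
    simp only [List.mem_cons, List.not_mem_nil, or_false] at hC
    rcases hC with rfl | rfl | rfl | rfl
    exacts [cyc8_0.2, cyc8_1.2, cyc8_2.2, cyc8_3.2])
  have hscc8 : scc G ≤ coverLength A8 := by
    refine Nat.sInf_le ⟨A8, ⟨hA8cyc, ?_⟩, rfl⟩
    intro e he
    refine hA8cov e he ?_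
    obtain ⟨a, b, he', hab⟩ := hrep e he
    rcases covfact8 a b hab with h | h | h | h
    · exact ⟨C8_0, by simp, by rw [he']; exact SimpleGraph.Subgraph.mem_edgeSet.mpr h⟩
    · exact ⟨C8_1, by simp, by rw [he']; exact SimpleGraph.Subgraph.mem_edgeSet.mpr h⟩
    · exact ⟨C8_2, by simp, by rw [he']; exact SimpleGraph.Subgraph.mem_edgeSet.mpr h⟩
    · exact ⟨C8_3, by simp, by rw [he']; exact SimpleGraph.Subgraph.mem_edgeSet.mpr h⟩
  have hlen8 : coverLength A8 = ∑ e ∈ G.edgeSet.toFinset, ((if c e ∈ (C8_0).edgeSet then 1 else 0) + ((if c e ∈ (C8_1).edgeSet then 1 else 0) + ((if c e ∈ (C8_2).edgeSet then 1 else 0) + ((if c e ∈ (C8_3).edgeSet then 1 else 0))))) := by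
    rw [hA8len]
    simp only [List.map_cons, List.sum_cons, List.map_nil, List.sum_nil, add_zero]
    rw [pull_ncard G c C8_0, pull_ncard G c C8_1, pull_ncard G c C8_2, pull_ncard G c C8_3]
    rw [← Finset.sum_add_distrib, ← Finset.sum_add_distrib, ← Finset.sum_add_distrib]
  obtain ⟨A9, hA9cyc, hA9cov, hA9len⟩ := pull_cover hcubic hcol [C9_0, C9_1, C9_2, C9_3] (by
    intro C hC
    simp only [List.mem_cons, List.not_mem_nil, or_false] at hC
    rcases hC with rfl | rfl | rfl | rfl
    exacts [cyc9_0.2, cyc9_1.2, cyc9_2.2, cyc9_3.2])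
  have hscc9 : scc G ≤ coverLength A9 := by
    refine Nat.sInf_le ⟨A9, ⟨hA9cyc, ?_⟩, rfl⟩
    intro e he
    refine hA9cov e he ?_
    obtain ⟨a, b, he', hab⟩ := hrep e he
    rcases covfact9 a b hab with h | h | h | h
    · exact ⟨C9_0, by simp, by rw [he']; exact SimpleGraph.Subgraph.mem_edgeSet.mpr h⟩
    · exact ⟨C9_1, by simp, by rw [he']; exact SimpleGraph.Subgraph.mem_edgeSet.mpr h⟩
    · exact ⟨C9_2, by simp, by rw [he']; exact SimpleGraph.Subgraph.mem_edgeSet.mpr h⟩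
    · exact ⟨C9_3, by simp, by rw [he']; exact SimpleGraph.Subgraph.mem_edgeSet.mpr h⟩
  have hlen9 : coverLength A9 = ∑ e ∈ G.edgeSet.toFinset, ((if c e ∈ (C9_0).edgeSet then 1 else 0) + ((if c e ∈ (C9_1).edgeSet then 1 else 0) + ((if c e ∈ (C9_2).edgeSet then 1 else 0) + ((if c e ∈ (C9_3).edgeSet then 1 else 0))))) := by
    rw [hA9len]
    simp only [List.map_cons, List.sum_cons, List.map_nil, List.sum_nil, add_zero]
    rw [pull_ncard G c C9_0, pull_ncard G c C9_1, pull_ncard G c C9_2, pull_ncard G c C9_3]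
    rw [← Finset.sum_add_distrib, ← Finset.sum_add_distrib, ← Finset.sum_add_distrib]
  have hsum : ∀ e ∈ G.edgeSet.toFinset, (((if c e ∈ (C0_0).edgeSet then 1 else 0) + ((if c e ∈ (C0_1).edgeSet then 1 else 0) + ((if c e ∈ (C0_2).edgeSet then 1 else 0) + ((if c e ∈ (C0_3).edgeSet then 1 else 0))))) + (((if c e ∈ (C1_0).edgeSet then 1 else 0) + ((if c e ∈ (C1_1).edgeSet then 1 else 0) + ((if c e ∈ (C1_2).edgeSet then 1 else 0) + ((if c e ∈ (C1_3).edgeSet then 1 else 0))))) + (((if c e ∈ (C2_0).edgeSet then 1 else 0) + ((if c e ∈ (C2_1).edgeSet then 1 else 0) + ((if c e ∈ (C2_2).edgeSet then 1 else 0) + ((if c e ∈ (C2_3).edgeSet then 1 else 0))))) + (((if c e ∈ (C3_0).edgeSet then 1 else 0) + ((if c e ∈ (C3_1).edgeSet then 1 else 0) + ((if c e ∈ (C3_2).edgeSet then 1 else 0) + ((if c e ∈ (C3_3).edgeSet then 1 else 0))))) + (((if c e ∈ (C4_0).edgeSet then 1 else 0) + ((if c e ∈ (C4_1).edgeSet then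 1 else 0) + ((if c e ∈ (C4_2).edgeSet then 1 else 0) + ((if c e ∈ (C4_3).edgeSet then 1 else 0))))) + (((if c e ∈ (C5_0).edgeSet then 1 else 0) + ((if c e ∈ (C5_1).edgeSet then 1 else 0) + ((if c e ∈ (C5_2).edgeSet then 1 else 0) + ((if c e ∈ (C5_3).edgeSet then 1 else 0))))) + (((if c e ∈ (C6_0).edgeSet then 1 else 0) + ((if c e ∈ (C6_1).edgeSet then 1 else 0) + ((if c e ∈ (C6_2).edgeSet then 1 else 0) + ((if c e ∈ (C6_3).edgeSet then 1 else 0))))) + (((if c e ∈ (C7_0).edgeSet then 1 else 0) + ((if c e ∈ (C7_1).edgeSet then 1 else 0) + ((if c e ∈ (C7_2).edgeSet then 1 else 0) + ((if c e ∈ (C7_3).edgeSet then 1 else 0))))) + (((if c e ∈ (C8_0).edgeSet then 1 else 0) + ((if c e ∈ (C8_1).edgeSet then 1 else 0) + ((if c e ∈ (C8_2).edgeSet then 1 else 0) + ((if c e ∈ (C8_3).edgeSet then 1 else 0))))) + (((if c e ∈ (C9_0).edgeSet then 1 else 0) + ((if c e ∈ (C9_1).edgeSet then 1 else 0) + ((if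 c e ∈ (C9_2).edgeSet then 1 else 0) + ((if c e ∈ (C9_3).edgeSet then 1 else 0))))))))))))))) = 14 := by
    intro e he
    have heG : e ∈ G.edgeSet := Set.mem_toFinset.mp he
    obtain ⟨a, b, he', hab⟩ := hrep e heG
    rw [he']
    have h14 := fact14 a b hab
    omega
  have htot : coverLength A0 + (coverLength A1 + (coverLength A2 + (coverLength A3 + (coverLength A4 + (coverLength A5 + (coverLength A6 + (coverLength A7 + (coverLength A8 + (coverLength A9))))))))) = 14 * G.edgeSet.toFinset.card := by
    rw [hlen0, hlen1, hlen2, hlen3, hlen4, hlen5, hlen6, hlen7, hlen8, hlen9]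
    rw [← Finset.sum_add_distrib, ← Finset.sum_add_distrib, ← Finset.sum_add_distrib, ← Finset.sum_add_distrib, ← Finset.sum_add_distrib, ← Finset.sum_add_distrib, ← Finset.sum_add_distrib, ← Finset.sum_add_distrib, ← Finset.sum_add_distrib]
    rw [Finset.sum_congr rfl hsum, Finset.sum_const, smul_eq_mul]
    ring
  omega


end ShortCycleCovers
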